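/- With the dynamic prices ρ_i(j) = ∑_{l≥i} π_l where π_l = (s_l/s_{l+1})·(C_{l+1}(j) − C_l(j)) and s_{l+1} ≥ 2·s_l for all l, the price difference between any slower machine i' and any faster machine i ≥ i' satisfies ρ_{i'}(j) − ρ_i(j) ≤ (1/2)·(C_i(j) − C_{i'}(j)). -/

import Mathlib

/-- Telescoping price bound: with `π l = (s l / s (l+1))·(C (l+1) − C l)`,
`s (l+1) ≥ 2·s l` and monotone makespans, for any slower machine `i' ≤ i`,
`ρ i' − ρ i ≤ (1/2)·(C i − C i')`. -/
theorem stmt_11 (m : ℕ) (s C π ρ : ℕ → ℝ)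
    (hspos : ∀ l, l < m → 0 < s l)
    (hs2 : ∀ l, l + 1 < m → 2 * s l ≤ s (l + 1))
    (hC : ∀ l, l + 1 < m → C l ≤ C (l + 1))
    (hπ : ∀ l, l + 1 < m → π l = s l / s (l + 1) * (C (l + 1) - C l))
    (hρ : ∀ l, l < m → ρ l = ∑ t ∈ Finset.Ico l (m - 1), π t)
    (i' i : ℕ) (h1 : i' ≤ i) (h2 : i < m) :
    ρ i' - ρ i ≤ 1 / 2 * (C i - C i') := by
  have hi'm : i' < m := lt_of_le_of_lt h1 h2
  rw [hρ i' hi'm, hρ i h2]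
  have hsplit := Finset.sum_Ico_consecutive π h1 (show i ≤ m - 1 by omega)
  rw [← hsplit, add_sub_cancel_right]
  have key : ∀ n, i' ≤ n → n < m →
      ∑ t ∈ Finset.Ico i' n, π t ≤ 1 / 2 * (C n - C i') := by
    intro n hn hnm
    induction n with
    | zero =>
      have : i' = 0 := Nat.le_zero.mp hn
      simp [this]
    | succ k ih =>
      rcases Nat.lt_or_ge i' (k+1) with hlt | hge
      · have hk : i' ≤ k := by omega
        have hkm : k < m := by omega
        rw [Finset.sum_Ico_succ_top hk]
        have hπk : π k ≤ 1 / 2 * (C (k+1) - C k) := by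
          rw [hπ k hnm]
          have hCk : 0 ≤ C (k+1) - C k := by linarith [hC k hnm]
          have hsk : 0 < s k := hspos k hkm
          have hsk1 : 0 < s (k+1) := hspos (k+1) hnm
          have hdiv : s k / s (k+1) ≤ 1/2 := by
            rw [div_le_iff₀ hsk1]
            linarith [hs2 k hnm]
          nlinarith
        have := ih hk hkm
        linarith
      · have : i' = k + 1 := by omega
        simp [this]
  exact key i h1 h2
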